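/- Euler's cubic as the derivative of the area function: let A, C, D, E, F be real numbers with A·C > 0. For every B with B² < A·C, the function g(B) = (C·D² + A·E² − 2·B·D·E − F·(A·C − B²))/(A·C − B²)^{3/2} is differentiable at B with derivative g'(B) = (F·B³ − 4·D·E·B² + (3·C·D² + 3·A·E² − A·C·F)·B − 2·A·C·D·E)/(A·C − B²)^{5/2}. In particular the interior critical points of the area along the pencil are exactly the roots of the cubic F·B³ − 4·D·E·B² + (3·C·D² + 3·A·E² − A·C·F)·B − 2·A·C·D·E = 0 lying in (−√(A·C), √(A·C)). -/

import Mathlib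

/-- E691 §11: derivative of Euler's area expression with respect to the pencil
parameter `B`, and the resulting characterisation of interior critical points as
roots of Euler's cubic. -/
theorem euler_cubic_is_derivative_of_area (A C D E F : ℝ) (hAC : 0 < A * C)
    (B : ℝ) (hB : B ^ 2 < A * C) :
    HasDerivAt
      (fun B : ℝ =>
        (C * D ^ 2 + A * E ^ 2 - 2 * B * D * E - F * (A * C - B ^ 2))
          / (A * C - B ^ 2) ^ ((3 : ℝ) / 2))
      ((F * B ^ 3 - 4 * D * E * B ^ 2 + (3 * C * D ^ 2 + 3 * A * E ^ 2 - A * C * F) * B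
          - 2 * A * C * D * E) / (A * C - B ^ 2) ^ ((5 : ℝ) / 2)) B ∧
    ((F * B ^ 3 - 4 * D * E * B ^ 2 + (3 * C * D ^ 2 + 3 * A * E ^ 2 - A * C * F) * B
          - 2 * A * C * D * E) / (A * C - B ^ 2) ^ ((5 : ℝ) / 2) = 0 ↔
      F * B ^ 3 - 4 * D * E * B ^ 2 + (3 * C * D ^ 2 + 3 * A * E ^ 2 - A * C * F) * B
          - 2 * A * C * D * E = 0) := by
  set u : ℝ := A * C - B ^ 2 with hu_def
  have hu : 0 < u := by simp [hu_def]; linarith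
  set s : ℝ := u ^ ((1 : ℝ) / 2) with hs_def
  have hs : 0 < s := Real.rpow_pos_of_pos hu _
  have hs2 : s ^ 2 = u := by
    rw [hs_def, ← Real.rpow_natCast (u ^ ((1:ℝ)/2)) 2, ← Real.rpow_mul hu.le]
    norm_num
  have h3 : u ^ ((3 : ℝ) / 2) = s ^ 3 := by
    rw [hs_def, ← Real.rpow_natCast (u ^ ((1:ℝ)/2)) 3, ← Real.rpow_mul hu.le]
    norm_num
  have h5 : u ^ ((5 : ℝ) / 2) = s ^ 5 := by
    rw [hs_def, ← Real.rpow_natCast (u ^ ((1:ℝ)/2)) 5, ← Real.rpow_mul hu.le]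
    norm_num
  have h12 : u ^ ((3 : ℝ) / 2 - 1) = s := by norm_num [hs_def]
  constructor
  · have hnum : HasDerivAt
        (fun B : ℝ => C * D ^ 2 + A * E ^ 2 - 2 * B * D * E - F * (A * C - B ^ 2))
        (-(2 * D * E) - F * (-(2 * B))) B := by
      have h1 : HasDerivAt (fun B : ℝ => A * C - B ^ 2) (-(2 * B)) B := by
        simpa using ((hasDerivAt_pow 2 B).const_sub (A * C))
      have h2 : HasDerivAt (fun B : ℝ => 2 * B * D * E) (2 * D * E) B := by
        have := (hasDerivAt_id B).const_mul 2
        simpa [mul_assoc, mul_comm, mul_left_comm] using (this.mul_const D).mul_const E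
      exact (((hasDerivAt_const B (C * D ^ 2 + A * E ^ 2)).sub h2).sub
        (h1.const_mul F)).congr_deriv (by ring)
    have hden0 : HasDerivAt (fun B : ℝ => A * C - B ^ 2) (-(2 * B)) B := by
      simpa using ((hasDerivAt_pow 2 B).const_sub (A * C))
    have hden : HasDerivAt (fun B : ℝ => (A * C - B ^ 2) ^ ((3 : ℝ) / 2))
        ((-(2 * B)) * ((3 : ℝ) / 2) * u ^ ((3 : ℝ) / 2 - 1)) B := by
      exact hden0.rpow_const (Or.inl hu.ne')
    have hne : u ^ ((3 : ℝ) / 2) ≠ 0 := by rw [h3]; positivity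
    have := hnum.div hden hne
    refine this.congr_deriv ?_
    symm
    rw [h3, h12, h5]
    have hu' : A * C - B ^ 2 = s ^ 2 := by rw [← hu_def, hs2]
    rw [hu'] 
    field_simp
    linear_combination (-(F*B) - 2*D*E) * hu'
  · rw [div_eq_zero_iff]
    have : u ^ ((5:ℝ)/2) ≠ 0 := by rw [h5]; positivity
    tauto
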